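/- Let ℓ₁, …, ℓ_n ∈ [0,1] be deterministic losses and X₁,…,X_n independent Bernoulli random variables with parameters p_t ≥ p_min > 0. If n ≥ log(1/δ)/p_min, then with probability at least 1 - δ: max_{k ≤ n} ∑_{t=1}^{k} (X_t ℓ_t / p_t - ℓ_t) ≤ 2·√(n·log(1/δ)/p_min). -/

import Mathlib

open MeasureTheory ProbabilityTheory
open scoped ENNReal NNReal

lemma exp_le_quad {x : ℝ} (hx : |x| ≤ 1) : Real.exp x ≤ 1 + x + x^2 := by
  have h := Real.exp_bound hx (n := 3) (by norm_num)
  have h3 : |x|^3 ≤ x^2 := by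
    calc |x|^3 = |x| * |x|^2 := by ring
    _ ≤ 1 * |x|^2 := by nlinarith [sq_abs x, abs_nonneg x]
    _ = x^2 := by rw [one_mul, sq_abs]
  rw [abs_sub_le_iff] at h
  have h1 := h.1
  simp [Finset.sum_range_succ, Nat.factorial] at h1
  nlinarith [h3]

set_option maxHeartbeats 1000000 in
theorem importance_sampling_concentration
    {Ω : Type*} [MeasurableSpace Ω] (P : Measure Ω) [IsProbabilityMeasure P]
    (n : ℕ) (ℓ : ℕ → ℝ) (hℓ : ∀ t < n, ℓ t ∈ Set.Icc (0 : ℝ) 1)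
    (p : ℕ → ℝ) (pmin : ℝ) (hpmin : 0 < pmin) (hp : ∀ t < n, pmin ≤ p t ∧ p t ≤ 1)
    (X : ℕ → Ω → ℝ) (hmeas : ∀ t, Measurable (X t))
    (h01 : ∀ t ω, X t ω = 0 ∨ X t ω = 1)
    (hBern : ∀ t, P {ω | X t ω = 1} = ENNReal.ofReal (p t))
    (hindep : iIndepFun X P)
    (δ : ℝ) (hδ : δ ∈ Set.Ioo (0 : ℝ) 1)
    (hn : Real.log (1 / δ) / pmin ≤ (n : ℝ)) :
    P {ω | ∀ k ≤ n, ∑ t ∈ Finset.range k, (X t ω * ℓ t / p t - ℓ t)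
        ≤ 2 * Real.sqrt ((n : ℝ) * Real.log (1 / δ) / pmin)}
      ≥ ENNReal.ofReal (1 - δ) := by
  obtain ⟨hδ0, hδ1⟩ := hδ
  -- basic scalars
  set L : ℝ := Real.log (1 / δ) with hLdef
  have hL : 0 < L := Real.log_pos (by rw [lt_div_iff₀ hδ0]; linarith)
  have hnL : L ≤ n * pmin := by
    rw [div_le_iff₀ hpmin] at hn; linarith
  have hn0 : 0 < (n : ℝ) := by
    rcases Nat.eq_zero_or_pos n with h | h
    · exfalso; rw [h] at hnL; push_cast at hnL; nlinarith
    · exact_mod_cast h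
  have hnn0 : 0 < n := by exact_mod_cast hn0
  set u : ℝ := 2 * Real.sqrt ((n : ℝ) * L / pmin) with hudef
  have hu0 : 0 < u := by
    apply mul_pos two_pos
    apply Real.sqrt_pos.2; positivity
  have hu2 : u ^ 2 * pmin = 4 * (n : ℝ) * L := by
    rw [hudef, mul_pow, Real.sq_sqrt (by positivity)]
    field_simp; ring
  set lam : ℝ := u * pmin / (2 * n) with hlamdef
  have hlam0 : 0 < lam := by positivity
  clear_value lam
  clear_value u
  have hlamu : lam * u = 2 * L := by
    rw [hlamdef]; field_simp; linear_combination hu2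
  have hlamsq : lam ^ 2 * ((n : ℝ) / pmin) = L := by
    rw [hlamdef]; field_simp; linear_combination hu2
  have hpmin1 : pmin ≤ 1 := le_trans (hp 0 hnn0).1 (hp 0 hnn0).2
  have hlamR : lam / pmin ≤ 1 := by
    have h1 : (lam / pmin) ^ 2 * ((n : ℝ) * pmin) = L := by
      rw [hlamdef]; field_simp; linear_combination hu2
    have h2 : (lam / pmin) ^ 2 ≤ 1 := by
      rw [← mul_le_mul_iff_of_pos_right (show (0:ℝ) < (n : ℝ) * pmin by positivity), h1, one_mul]
      exact hnL
    nlinarith [div_pos hlam0 hpmin]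
  have hlam1 : lam ≤ 1 := by
    calc lam = (lam / pmin) * pmin := by field_simp
    _ ≤ 1 * 1 := mul_le_mul hlamR hpmin1 hpmin.le zero_le_one
    _ = 1 := by ring
  -- The per-step factors
  set a : ℕ → ℝ := fun t => Real.exp (lam * (ℓ t / p t - ℓ t)) with hadef
  set b : ℕ → ℝ := fun t => Real.exp (-(lam * ℓ t)) with hbdef
  set m : ℕ → ℝ := fun t => if t < n then p t * a t + (1 - p t) * b t else 1 with hmdef
  set G : ℕ → Ω → ℝ := fun t ω =>
    if t < n then Real.exp (lam * (X t ω * ℓ t / p t - ℓ t)) else 1 with hGdef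
  have hGpos : ∀ t ω, 0 < G t ω := by
    intro t ω; rw [hGdef]; dsimp only
    split
    · exact Real.exp_pos _
    · norm_num
  have hGaffine : ∀ t < n, ∀ ω, G t ω = (a t - b t) * X t ω + b t := by
    intro t ht ω
    rcases h01 t ω with h | h <;> rw [hGdef] <;> dsimp only <;> rw [if_pos ht, h]
    · simp [hbdef]
    · simp [hadef]
  -- scalar bounds on m
  have hmb : ∀ t < n, 1 ≤ m t ∧ m t ≤ Real.exp (lam ^ 2 / pmin) := by
    intro t ht
    obtain ⟨hp1, hp2⟩ := hp t ht
    obtain ⟨hl0, hl1⟩ := hℓ t ht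
    have hpt0 : 0 < p t := lt_of_lt_of_le hpmin hp1
    set y1 : ℝ := ℓ t / p t - ℓ t with hy1
    set y0 : ℝ := -ℓ t with hy0
    have hybal : p t * y1 + (1 - p t) * y0 = 0 := by
      rw [hy1, hy0]; field_simp; ring
    have hy1nn : 0 ≤ y1 := by
      rw [hy1, sub_nonneg]
      rw [le_div_iff₀ hpt0]; nlinarith
    have hy1ub : y1 ≤ 1 / pmin := by
      have h2 : ℓ t / p t ≤ 1 / pmin := div_le_div₀ zero_le_one hl1 hpmin hp1
      rw [hy1]; linarith
    have ha' : a t = Real.exp (lam * y1) := rfl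
    have hb' : b t = Real.exp (lam * y0) := by rw [hbdef, hy0]; ring_nf
    have hmt : m t = p t * a t + (1 - p t) * b t := by rw [hmdef]; exact if_pos ht
    clear_value y1 y0
    have e1 := Real.add_one_le_exp (lam * y1)
    have e0 := Real.add_one_le_exp (lam * y0)
    have h1p : (0:ℝ) ≤ 1 - p t := by linarith
    have hybal' : p t * (lam * y1) + (1 - p t) * (lam * y0) = 0 := by
      linear_combination lam * hybal
    constructor
    · rw [hmt, ha', hb']
      linarith [mul_le_mul_of_nonneg_left e1 hpt0.le,
        mul_le_mul_of_nonneg_left e0 h1p]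
    · have habs1 : |lam * y1| ≤ 1 := by
        rw [abs_of_nonneg (by positivity)]
        calc lam * y1 ≤ lam * (1 / pmin) := mul_le_mul_of_nonneg_left hy1ub hlam0.le
        _ ≤ 1 := by rw [mul_one_div]; exact hlamR
      have habs0 : |lam * y0| ≤ 1 := by
        have hprod0 : 0 ≤ lam * ℓ t := by positivity
        have hprod1 : lam * ℓ t ≤ 1 := mul_le_one₀ hlam1 hl0 hl1
        rw [abs_le]
        constructor <;> rw [hy0] <;> linarith [hprod0, hprod1]
      have q1 := exp_le_quad habs1
      have q0 := exp_le_quad habs0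
      have hvar : p t * y1 ^ 2 + (1 - p t) * y0 ^ 2 ≤ 1 / pmin := by
        have heq : p t * y1 ^ 2 + (1 - p t) * y0 ^ 2 = ℓ t ^ 2 * (1 - p t) / p t := by
          rw [hy1, hy0]; field_simp; ring
        rw [heq]
        calc ℓ t ^ 2 * (1 - p t) / p t ≤ 1 / p t :=
              div_le_div₀ zero_le_one (by nlinarith) hpt0 le_rfl
        _ ≤ 1 / pmin := div_le_div₀ zero_le_one le_rfl hpmin hp1
      rw [hmt, ha', hb']
      have final := Real.add_one_le_exp (lam ^ 2 / pmin)
      have hvar' : lam ^ 2 * (p t * y1 ^ 2 + (1 - p t) * y0 ^ 2) ≤ lam ^ 2 / pmin := by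
        have h := mul_le_mul_of_nonneg_left hvar (sq_nonneg lam)
        calc lam ^ 2 * (p t * y1 ^ 2 + (1 - p t) * y0 ^ 2) ≤ lam ^ 2 * (1 / pmin) := h
        _ = lam ^ 2 / pmin := by ring
      linarith [mul_le_mul_of_nonneg_left q1 hpt0.le,
        mul_le_mul_of_nonneg_left q0 h1p]
  have hm1 : ∀ t, 1 ≤ m t := by
    intro t
    by_cases ht : t < n
    · exact (hmb t ht).1
    · rw [hmdef]; simp [if_neg ht]
  have hmpos : ∀ t, 0 < m t := fun t => lt_of_lt_of_le zero_lt_one (hm1 t)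
  have hm_ge : ∀ t, ¬ t < n → m t = 1 := by
    intro t ht; rw [hmdef]; simp [if_neg ht]
  have hG_ge : ∀ t, ¬ t < n → ∀ ω, G t ω = 1 := by
    intro t ht ω; rw [hGdef]; simp [if_neg ht]
  -- integral of X t
  have hXint : ∀ t, t < n → Integrable (X t) P ∧ ∫ ω, X t ω ∂P = p t := by
    intro t ht
    have hA : MeasurableSet {ω | X t ω = 1} := hmeas t (measurableSet_singleton 1)
    have hXind : X t = Set.indicator {ω | X t ω = 1} (fun _ => (1:ℝ)) := by
      funext ω
      simp only [Set.indicator_apply, Set.mem_setOf_eq]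
      rcases h01 t ω with h | h <;> simp [h]
    constructor
    · rw [hXind]; exact (integrable_const (1:ℝ)).indicator hA
    · rw [hXind, integral_indicator hA, setIntegral_const, measureReal_def, hBern t, smul_eq_mul, mul_one]
      exact ENNReal.toReal_ofReal (le_of_lt (lt_of_lt_of_le hpmin (hp t ht).1))
  -- integral and integrability of G t
  have hGint : ∀ t, Integrable (G t) P ∧ ∫ ω, G t ω ∂P = m t := by
    intro t
    by_cases ht : t < n
    · have hfun : G t = fun ω => (a t - b t) * X t ω + b t := funext (hGaffine t ht)
      constructor
      · rw [hfun]
        exact (((hXint t ht).1.const_mul _).add (integrable_const _))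
      · rw [hfun, integral_add ((hXint t ht).1.const_mul _) (integrable_const _),
          integral_const_mul, (hXint t ht).2, integral_const, probReal_univ]
        rw [hmdef]; simp only [if_pos ht, ENNReal.toReal_one, smul_eq_mul]; ring
    · constructor
      · have : G t = fun _ => 1 := funext (hG_ge t ht)
        rw [this]; exact integrable_const _
      · have : G t = fun _ => 1 := funext (hG_ge t ht)
        rw [this, hm_ge t ht, integral_const, probReal_univ]; simp
  -- filtration
  set s : ℕ → MeasurableSpace Ω := fun t => MeasurableSpace.comap (X t) inferInstance with hs
  have hsle : ∀ t, s t ≤ ‹MeasurableSpace Ω› := fun t => (hmeas t).comap_le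
  set 𝒢 : Filtration ℕ ‹MeasurableSpace Ω› :=
    ⟨fun k => ⨆ i ∈ Set.Iio k, s i,
     fun i j hij => biSup_mono fun t ht => lt_of_lt_of_le ht hij,
     fun k => iSup₂_le fun i _ => hsle i⟩ with h𝒢
  have h𝒢k : ∀ k, 𝒢 k = ⨆ i ∈ Set.Iio k, s i := fun k => rfl
  have hsle𝒢 : ∀ t k, t < k → s t ≤ 𝒢 k := by
    intro t k htk
    rw [h𝒢k]
    exact le_iSup₂ (f := fun i (_ : i ∈ Set.Iio k) => s i) t htk
  have hindep' : ∀ k, Indep (s k) (𝒢 k) P := by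
    intro k
    have h := ProbabilityTheory.indep_biSup_compl hsle hindep {k}
    simp only [iSup_singleton] at h
    exact indep_of_indep_of_le_right h
      (iSup₂_le fun i hi => le_iSup₂ (f := fun i (_ : i ∈ ({k}ᶜ : Set ℕ)) => s i) i
        (Set.mem_compl_singleton_iff.2 (ne_of_lt hi)))
  -- measurability of G t wrt s t
  have hXs : ∀ t, Measurable[s t] (X t) := fun t => Measurable.of_comap_le le_rfl
  have hGs : ∀ t, Measurable[s t] (G t) := by
    intro t
    have hφ : Measurable (fun y : ℝ => if t < n then Real.exp (lam * (y * ℓ t / p t - ℓ t)) else 1) := by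
      by_cases ht : t < n
      · simp only [if_pos ht]
        fun_prop
      · simp only [if_neg ht]
        exact measurable_const
    have : G t = (fun y : ℝ => if t < n then Real.exp (lam * (y * ℓ t / p t - ℓ t)) else 1) ∘ X t := by
      funext ω; rw [hGdef]; rfl
    rw [this]
    exact hφ.comp (hXs t)
  -- the martingale
  set f : ℕ → Ω → ℝ := fun k ω => ∏ t ∈ Finset.range k, (G t ω / m t) with hf
  have hfpos : ∀ k ω, 0 < f k ω := by
    intro k ω
    exact Finset.prod_pos fun t _ => div_pos (hGpos t ω) (hmpos t)
  set bnd : ℕ → ℝ := fun t => if t < n then max (a t) (b t) else 1 with hbnd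
  set B : ℕ → ℝ := fun k => ∏ t ∈ Finset.range k, (bnd t / m t) with hB
  have hGbnd : ∀ t ω, G t ω ≤ bnd t := by
    intro t ω
    by_cases ht : t < n
    · have hb1 : bnd t = max (a t) (b t) := by simp only [hbnd, if_pos ht]
      rw [hb1]
      rcases h01 t ω with h | h <;> rw [hGaffine t ht ω, h]
      · simpa using le_max_right _ _
      · simpa using le_max_left _ _
    · have hb1 : bnd t = 1 := by simp only [hbnd, if_neg ht]
      rw [hb1, hG_ge t ht ω]
  have hfB : ∀ k ω, f k ω ≤ B k := by
    intro k ω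
    refine Finset.prod_le_prod (fun t _ => le_of_lt (div_pos (hGpos t ω) (hmpos t))) ?_
    intro t _
    exact div_le_div₀ ((hGpos t ω).le.trans (hGbnd t ω)) (hGbnd t ω) (hmpos t) le_rfl
  have hfmeas : ∀ k, Measurable[𝒢 k] (f k) := by
    intro k
    apply Finset.measurable_prod
    intro t ht
    have h1 : Measurable[𝒢 k] (G t) := (hGs t).mono (hsle𝒢 t k (Finset.mem_range.mp ht)) le_rfl
    exact h1.div_const _
  have hadp : StronglyAdapted 𝒢 f := fun k => (hfmeas k).stronglyMeasurable
  have hfint : ∀ k, Integrable (f k) P := by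
    intro k
    refine Integrable.mono' (integrable_const (B k)) ?_ ?_
    · exact ((hfmeas k).mono (𝒢.le k) le_rfl).aestronglyMeasurable
    · refine Filter.Eventually.of_forall fun ω => ?_
      rw [Real.norm_eq_abs, abs_of_nonneg (hfpos k ω).le]
      exact hfB k ω
  have hsucc : ∀ k, f (k+1) = f k * fun ω => G k ω / m k := by
    intro k; funext ω
    simp only [hf, Pi.mul_apply]
    exact Finset.prod_range_succ _ _
  have hcond : ∀ k, f k =ᵐ[P] P[f (k+1) | 𝒢 k] := by
    intro k
    by_cases hk : k < n
    · have hgint : Integrable (fun ω => G k ω / m k) P := (hGint k).1.div_const _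
      have hmul := condExp_stronglyMeasurable_mul_of_bound (𝒢.le k) (hadp k) hgint (B k)
        (Filter.Eventually.of_forall fun ω => by
          rw [Real.norm_eq_abs, abs_of_nonneg (hfpos k ω).le]; exact hfB k ω)
      have hgmeas : StronglyMeasurable[s k] (fun ω => G k ω / m k) :=
        ((hGs k).div_const _).stronglyMeasurable
      have hindg := condExp_indep_eq (hsle k) (𝒢.le k) hgmeas (hindep' k)
      have hintg : ∫ ω, G k ω / m k ∂P = 1 := by
        rw [integral_div, (hGint k).2, div_self (hmpos k).ne']
      rw [hsucc k]
      refine (hmul.trans ?_).symm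
      rw [hintg] at hindg
      have h1 : (f k * fun _ : Ω => (1:ℝ)) = f k := mul_one (f k)
      have h2 : (f k * fun _ : Ω => (1:ℝ)) =ᵐ[P] f k := by rw [h1]
      exact ((Filter.EventuallyEq.refl _ (f k)).mul hindg).trans h2
    · have hfeq : f (k+1) = f k := by
        rw [hsucc k]; funext ω
        rw [Pi.mul_apply, hG_ge k hk ω, hm_ge k hk]; simp
      rw [hfeq, condExp_of_stronglyMeasurable (𝒢.le k) (hadp k) (hfint k)]
  have hEf : ∀ k, ∫ ω, f k ω ∂P = 1 := by
    intro k
    induction k with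
    | zero =>
      simp only [hf, Finset.range_zero, Finset.prod_empty]
      simp [integral_const]
    | succ k ih =>
      have h1 : ∫ ω, f (k+1) ω ∂P = ∫ ω, (P[f (k+1) | 𝒢 k]) ω ∂P :=
        (integral_condExp (𝒢.le k)).symm
      have h2 : ∫ ω, (P[f (k+1) | 𝒢 k]) ω ∂P = ∫ ω, f k ω ∂P :=
        integral_congr_ae (hcond k).symm
      rw [h1, h2, ih]
  -- Doob
  have hmart : Martingale f 𝒢 P := martingale_nat hadp hfint hcond
  have hsubm : Submartingale f 𝒢 P := hmart.submartingale
  have hnonneg : 0 ≤ f :=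
    Pi.le_def.mpr fun k => Pi.le_def.mpr fun ω => (hfpos k ω).le
  set ε₀ : ℝ := Real.exp (lam * u) / ∏ t ∈ Finset.range n, m t with hε₀def
  have hprodpos : 0 < ∏ t ∈ Finset.range n, m t := Finset.prod_pos fun t _ => hmpos t
  have hε₀pos : 0 < ε₀ := div_pos (Real.exp_pos _) hprodpos
  set εn : ℝ≥0 := ε₀.toNNReal with hεn
  set S : Set Ω := {ω | ((εn : ℝ≥0) : ℝ) ≤
      (Finset.range (n+1)).sup' Finset.nonempty_range_add_one fun k => f k ω} with hSdef
  have hdoob : ((εn : ℝ≥0) : ℝ≥0∞) * P S ≤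
      ENNReal.ofReal (∫ ω in S, f n ω ∂P) := by
    have h := maximal_ineq hsubm hnonneg (ε := εn) n
    simpa [ENNReal.smul_def, hSdef] using h
  have hRHS : ENNReal.ofReal (∫ ω in S, f n ω ∂P) ≤ 1 := by
    have h1 : ∫ ω in S, f n ω ∂P ≤ ∫ ω, f n ω ∂P :=
      setIntegral_le_integral (hfint n) (Filter.Eventually.of_forall fun ω => (hfpos n ω).le)
    calc ENNReal.ofReal (∫ ω in S, f n ω ∂P) ≤ ENNReal.ofReal (∫ ω, f n ω ∂P) :=
          ENNReal.ofReal_le_ofReal h1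
    _ = 1 := by rw [hEf n, ENNReal.ofReal_one]
  have hmain : ((εn : ℝ≥0) : ℝ≥0∞) * P S ≤ 1 := hdoob.trans hRHS
  -- lower bound on ε₀
  have hε₀ge : 1 / δ ≤ ε₀ := by
    have hprodle : ∏ t ∈ Finset.range n, m t ≤ Real.exp L := by
      have hLeq : lam ^ 2 / pmin * n = L := by
        calc lam ^ 2 / pmin * n = lam ^ 2 * ((n : ℝ) / pmin) := by ring
        _ = L := hlamsq
      calc ∏ t ∈ Finset.range n, m t
          ≤ ∏ _t ∈ Finset.range n, Real.exp (lam ^ 2 / pmin) :=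
            Finset.prod_le_prod (fun t _ => (hmpos t).le)
              (fun t ht => (hmb t (Finset.mem_range.mp ht)).2)
      _ = Real.exp (lam ^ 2 / pmin) ^ n := by rw [Finset.prod_const, Finset.card_range]
      _ = Real.exp (lam ^ 2 / pmin * n) := by
            rw [← Real.exp_nat_mul]; ring_nf
      _ = Real.exp L := by rw [hLeq]
    have h1 : Real.exp (lam * u) / Real.exp L ≤ ε₀ :=
      div_le_div_of_nonneg_left (Real.exp_pos _).le hprodpos hprodle
    have h2 : Real.exp (lam * u) / Real.exp L = Real.exp L := by
      rw [← Real.exp_sub, hlamu]; ring_nf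
    have h3 : Real.exp L = 1 / δ := Real.exp_log (by positivity)
    rw [h2, h3] at h1
    exact h1
  have hεδ : (1:ℝ≥0∞) ≤ ((εn : ℝ≥0) : ℝ≥0∞) * ENNReal.ofReal δ := by
    have hreal : 1 ≤ ε₀ * δ := by
      rw [div_le_iff₀ hδ0] at hε₀ge; linarith
    calc (1:ℝ≥0∞) = ENNReal.ofReal (1:ℝ) := ENNReal.ofReal_one.symm
    _ ≤ ENNReal.ofReal (ε₀ * δ) := ENNReal.ofReal_le_ofReal hreal
    _ = ENNReal.ofReal ε₀ * ENNReal.ofReal δ := ENNReal.ofReal_mul hε₀pos.le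
    _ = ((εn : ℝ≥0) : ℝ≥0∞) * ENNReal.ofReal δ := by rw [hεn]; rfl
  have hPS : P S ≤ ENNReal.ofReal δ := by
    have h := hmain.trans hεδ
    have hne : ((εn : ℝ≥0) : ℝ≥0∞) ≠ 0 := by
      rw [hεn]
      exact ENNReal.coe_ne_zero.mpr (Real.toNNReal_pos.mpr hε₀pos).ne'
    exact (ENNReal.mul_le_mul_iff_right hne ENNReal.coe_ne_top).mp h
  -- the good event
  set good : Set Ω := {ω | ∀ k ≤ n, ∑ t ∈ Finset.range k, (X t ω * ℓ t / p t - ℓ t) ≤ u}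
    with hgooddef
  have hsummeas : ∀ k, Measurable fun ω => ∑ t ∈ Finset.range k, (X t ω * ℓ t / p t - ℓ t) := by
    intro k
    apply Finset.measurable_sum
    intro t _
    exact (((hmeas t).mul_const _).div_const _).sub measurable_const
  have hgoodmeas : MeasurableSet good := by
    have : good = ⋂ (k) (_ : k ≤ n),
        {ω | ∑ t ∈ Finset.range k, (X t ω * ℓ t / p t - ℓ t) ≤ u} := by
      ext ω; simp [hgooddef]
    rw [this]
    exact MeasurableSet.iInter fun k => MeasurableSet.iInter fun _ =>
      measurableSet_le (hsummeas k) measurable_const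
  have hsubset : goodᶜ ⊆ S := by
    intro ω hω
    simp only [hgooddef, Set.mem_compl_iff, Set.mem_setOf_eq] at hω
    push_neg at hω
    obtain ⟨k, hk, hgt⟩ := hω
    simp only [hSdef, Set.mem_setOf_eq]
    rw [hεn, Real.coe_toNNReal _ hε₀pos.le]
    have hfk : f k ω = Real.exp (lam * ∑ t ∈ Finset.range k, (X t ω * ℓ t / p t - ℓ t)) /
        ∏ t ∈ Finset.range k, m t := by
      rw [hf]
      dsimp only
      rw [Finset.prod_div_distrib, Finset.mul_sum, Real.exp_sum]
      congr 1
      apply Finset.prod_congr rfl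
      intro t ht
      have htn : t < n := lt_of_lt_of_le (Finset.mem_range.mp ht) hk
      rw [hGdef]; simp only [if_pos htn]
    have hstep : ε₀ ≤ f k ω := by
      rw [hfk, hε₀def]
      exact div_le_div₀ (Real.exp_pos _).le
        (Real.exp_le_exp.mpr (mul_le_mul_of_nonneg_left hgt.le hlam0.le))
        (Finset.prod_pos fun t _ => hmpos t)
        (by
          have hdecomp : (∏ t ∈ Finset.range k, m t) * ∏ t ∈ Finset.Ico k n, m t =
              ∏ t ∈ Finset.range n, m t := by
            exact Finset.prod_range_mul_prod_Ico m hk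
          rw [← hdecomp]
          have h1 : (1:ℝ) ≤ ∏ t ∈ Finset.Ico k n, m t := by
            calc (1:ℝ) = ∏ _t ∈ Finset.Ico k n, (1:ℝ) := Finset.prod_const_one.symm
            _ ≤ ∏ t ∈ Finset.Ico k n, m t :=
              Finset.prod_le_prod (fun i _ => zero_le_one) (fun i _ => hm1 i)
          nlinarith [Finset.prod_pos (fun t (_ : t ∈ Finset.range k) => hmpos t)])
    exact le_trans hstep
      (Finset.le_sup' (fun k => f k ω) (Finset.mem_range.mpr (Nat.lt_succ_of_le hk)))
  have hPc : P goodᶜ ≤ ENNReal.ofReal δ := (measure_mono hsubset).trans hPS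
  have hsum1 : P good + P goodᶜ = 1 := (measure_add_measure_compl hgoodmeas).trans measure_univ
  have hof : ENNReal.ofReal (1 - δ) = 1 - ENNReal.ofReal δ := by
    rw [ENNReal.ofReal_sub _ hδ0.le, ENNReal.ofReal_one]
  rw [ge_iff_le, hof, tsub_le_iff_right]
  calc (1:ℝ≥0∞) = P good + P goodᶜ := hsum1.symm
  _ ≤ P good + ENNReal.ofReal δ := add_le_add_right hPc _
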